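/- With D(t) = C(t) − 1 where C(t) is the Catalan generating function, (1+D(t))/(1−D(t)) = ∑_{n≥0} binomial(2n,n) t^n as formal power series. -/

import Mathlib

open PowerSeries Finset

/-- Generating function of the Catalan numbers `C_n = (1/(n+1))·binom(2n,n)`. -/
noncomputable def catGF : PowerSeries ℚ :=
  PowerSeries.mk fun n => (Nat.choose (2 * n) n : ℚ) / (n + 1)

/-- `D(t) = C(t) - 1`. -/
noncomputable def DGF : PowerSeries ℚ := catGF - 1

/-- A lattice walk of length `n` with steps `±1`. -/
def IsWalk (n : ℕ) (L : Fin (n + 1) → ℤ) : Prop :=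
  ∀ k : Fin n, |L k.succ - L k.castSucc| = 1

/-- Two walks intersect (share a common point at the same time). -/
def Meets {m : ℕ} (L L' : Fin m → ℤ) : Prop := ∃ k, L k = L' k

/-- All triples of walks of length `n` starting at heights `0, 2i, 2i+2j`. -/
def USet (i j n : ℕ) :
    Set ((Fin (n + 1) → ℤ) × (Fin (n + 1) → ℤ) × (Fin (n + 1) → ℤ)) :=
  {T | IsWalk n T.1 ∧ IsWalk n T.2.1 ∧ IsWalk n T.2.2 ∧
    T.1 0 = 0 ∧ T.2.1 0 = 2 * i ∧ T.2.2 0 = 2 * i + 2 * j}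

/-- Triples where `L₁` and `L₂` are nonintersecting. -/
def W12Set (i j n : ℕ) := {T ∈ USet i j n | ¬ Meets T.1 T.2.1}

/-- Triples where `L₂` and `L₃` are nonintersecting. -/
def W23Set (i j n : ℕ) := {T ∈ USet i j n | ¬ Meets T.2.1 T.2.2}

/-- Triples where `L₁` intersects `L₃`. -/
def M13Set (i j n : ℕ) := {T ∈ USet i j n | Meets T.1 T.2.2}

/-- Triples where `L₂` intersects both `L₁` and `L₃`. -/
def M1223Set (i j n : ℕ) :=
  {T ∈ USet i j n | Meets T.2.1 T.1 ∧ Meets T.2.1 T.2.2}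

/-- Vicious (pairwise nonintersecting) triples. -/
def VSet (i j n : ℕ) :=
  {T ∈ USet i j n | ¬ Meets T.1 T.2.1 ∧ ¬ Meets T.2.1 T.2.2 ∧ ¬ Meets T.1 T.2.2}

/-- Pairs of walks of length `n` starting at heights `0` and `2i`. -/
def PairSet (i n : ℕ) : Set ((Fin (n + 1) → ℤ) × (Fin (n + 1) → ℤ)) :=
  {P | IsWalk n P.1 ∧ IsWalk n P.2 ∧ P.1 0 = 0 ∧ P.2 0 = 2 * i}

/-- Intersecting pairs. -/
def MSet (i n : ℕ) := {P ∈ PairSet i n | Meets P.1 P.2}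

/-- Nonintersecting (vicious) pairs. -/
def NSet (i n : ℕ) := {P ∈ PairSet i n | ¬ Meets P.1 P.2}

/-- Converging pairs: never meet before time `n`, meet at time `n`. -/
def TSet (i n : ℕ) :=
  {P ∈ PairSet i n | (∀ k : Fin (n + 1), (k : ℕ) < n → P.1 k ≠ P.2 k) ∧
    P.1 (Fin.last n) = P.2 (Fin.last n)}

/-- 2-watermelons of length `n`. -/
def MelonSet (n : ℕ) : Set ((Fin (n + 1) → ℤ) × (Fin (n + 1) → ℤ)) :=
  {P | IsWalk n P.1 ∧ IsWalk n P.2 ∧ P.1 0 = 0 ∧ P.2 0 = 2 ∧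
    P.2 (Fin.last n) = P.1 (Fin.last n) + 2 ∧ ∀ k, P.1 k < P.2 k}

/-- Partial Dyck paths of length `2n` from height `2i` to `0`, strictly positive before the end. -/
def PDyckSet (i n : ℕ) : Set (Fin (2 * n + 1) → ℤ) :=
  {Q | IsWalk (2 * n) Q ∧ Q 0 = 2 * i ∧ Q (Fin.last (2 * n)) = 0 ∧
    ∀ k : Fin (2 * n + 1), (k : ℕ) < 2 * n → 0 < Q k}


noncomputable def Cq : PowerSeries ℚ := PowerSeries.mk fun n => (catalan n : ℚ)
noncomputable def Bq : PowerSeries ℚ := PowerSeries.mk fun n => (Nat.choose (2 * n) n : ℚ)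

lemma cb_eq (n : ℕ) : (Nat.choose (2 * n) n : ℚ) = (Nat.centralBinom n : ℚ) := rfl

lemma cat_mul (n : ℕ) :
    ((n : ℚ) + 1) * (catalan n : ℚ) = (Nat.centralBinom n : ℚ) := by
  exact_mod_cast succ_mul_catalan_eq_centralBinom n

lemma catGF_eq_Cq : catGF = Cq := by
  ext n
  simp only [catGF, Cq, PowerSeries.coeff_mk]
  have h' := cat_mul n
  have hn : ((n : ℚ) + 1) ≠ 0 := by positivity
  rw [cb_eq, ← h']
  field_simp

lemma Cq_eq : Cq = 1 + PowerSeries.X * Cq ^ 2 := by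
  ext n
  cases n with
  | zero => simp [Cq]
  | succ m =>
      rw [map_add, PowerSeries.coeff_one, sq, PowerSeries.coeff_succ_X_mul,
        PowerSeries.coeff_mul]
      simp only [Cq, PowerSeries.coeff_mk, Nat.succ_ne_zero, if_false, zero_add]
      rw [catalan_succ' m]
      push_cast
      rfl

lemma cb_succ (n : ℕ) :
    (Nat.centralBinom (n + 1) : ℚ) = 4 * Nat.centralBinom n - 2 * catalan n := by
  have h1 : ((n : ℚ) + 1) * (Nat.centralBinom (n + 1) : ℚ)
      = 2 * (2 * n + 1) * (Nat.centralBinom n : ℚ) := by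
    exact_mod_cast Nat.succ_mul_centralBinom_succ n
  have h2 := cat_mul n
  have hn : ((n : ℚ) + 1) ≠ 0 := by positivity
  apply mul_left_cancel₀ hn
  linear_combination h1 + 2 * h2

lemma Bq_eq : Bq * (1 - 4 * PowerSeries.X) = 1 - 2 * PowerSeries.X * Cq := by
  have key : Bq = 1 + 4 * PowerSeries.X * Bq - 2 * PowerSeries.X * Cq := by
    ext n
    cases n with
    | zero => simp [Bq, Cq]
    | succ m =>
        rw [map_sub, map_add, PowerSeries.coeff_one]
        rw [show (4 : PowerSeries ℚ) * PowerSeries.X * Bq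
              = PowerSeries.X * (PowerSeries.C (R := ℚ) 4 * Bq) by
            rw [← map_ofNat (PowerSeries.C (R := ℚ)) 4]; ring,
          show (2 : PowerSeries ℚ) * PowerSeries.X * Cq
              = PowerSeries.X * (PowerSeries.C (R := ℚ) 2 * Cq) by
            rw [← map_ofNat (PowerSeries.C (R := ℚ)) 2]; ring,
          PowerSeries.coeff_succ_X_mul, PowerSeries.coeff_succ_X_mul,
          PowerSeries.coeff_C_mul, PowerSeries.coeff_C_mul]
        simp only [Bq, Cq, PowerSeries.coeff_mk, Nat.succ_ne_zero, if_false, zero_add]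
        rw [cb_eq, cb_eq, cb_succ m]
  linear_combination key

theorem stmt3 :
    (1 + DGF) * (1 - DGF)⁻¹ = PowerSeries.mk (fun n => (Nat.choose (2 * n) n : ℚ)) := by
  have hC : (1 : PowerSeries ℚ) + DGF = Cq := by
    rw [DGF, catGF_eq_Cq]; ring
  have hC2 : (1 : PowerSeries ℚ) - DGF = 2 - Cq := by
    rw [DGF, catGF_eq_Cq]; ring
  have hB : PowerSeries.mk (fun n => ((2 * n).choose n : ℚ)) = Bq := rfl
  have hcc : PowerSeries.constantCoeff (R := ℚ) (2 - Cq) ≠ 0 := by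
    rw [map_sub, map_ofNat]
    simp [Cq, PowerSeries.constantCoeff_mk]
    norm_num
  rw [hC, hC2, hB, eq_comm, PowerSeries.eq_mul_inv_iff_mul_eq hcc]
  have h14 : (1 - 4 * PowerSeries.X : PowerSeries ℚ) ≠ 0 := by
    intro h
    have := congrArg (PowerSeries.constantCoeff (R := ℚ)) h
    simp at this
  apply mul_right_cancel₀ h14
  have hCq := Cq_eq
  have hBq := Bq_eq
  linear_combination (2 - Cq) * hBq - 2 * hCq
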